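/- arXiv:2201.00793 — 3 statements merged into one kernel-verified Lean document; each statement's English description precedes it below -/
import Mathlib

section
/- Let A be a commutative Banach algebra, X a nonempty finite set, and 1 ≤ p < ∞. Suppose there exists β > 0 such that for every finite family c₁,…,cₙ of unimodular complex numbers and characters φ₁,…,φₙ ∈ Δ(A) there exists a ∈ A with ‖a‖ ≤ β and â(φᵢ) = cᵢ for all i. Then the same interpolation property holds for ℓ^p(X, A): there exists β' > 0 such that for every finite family of unimodular cᵢ and characters ψᵢ ∈ Δ(ℓ^p(X, A)) there is f ∈ ℓ^p(X, A) with ‖f‖_{p,A} ≤ β' and f̂(ψᵢ) = cᵢ. -/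
open WeakDual

/-- Let `A` be a commutative Banach algebra, `X` a nonempty finite set
and `1 ≤ p < ∞`. If unimodular interpolation with a uniform bound `β` holds for the
characters of `A`, then it holds (with some bound `β'`, in the `ℓ^p`-norm) for the
characters of `ℓ^p(X, A)`, i.e. of the algebra `X → A` with pointwise product. -/
theorem lp_interpolation_of_interpolation {X A : Type*} [Fintype X] [Nonempty X]
    [NormedCommRing A] [NormedAlgebra ℂ A] [CompleteSpace A]
    (p : ℝ) (hp : 1 ≤ p)
    (β : ℝ) (hβ : 0 < β)
    (hA : ∀ (n : ℕ) (c : Fin n → ℂ), (∀ i, ‖c i‖ = 1) →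
      ∀ φ : Fin n → characterSpace ℂ A,
        ∃ a : A, ‖a‖ ≤ β ∧ ∀ i, φ i a = c i) :
    ∃ β' > (0 : ℝ), ∀ (n : ℕ) (c : Fin n → ℂ), (∀ i, ‖c i‖ = 1) →
      ∀ ψ : Fin n → characterSpace ℂ (X → A),
        ∃ f : X → A, (∑ x : X, ‖f x‖ ^ p) ^ (1 / p) ≤ β' ∧ ∀ i, ψ i f = c i := by
  have hp0 : 0 < p := lt_of_lt_of_le one_pos hp
  set N : ℝ := (Fintype.card X : ℝ) with hN
  have hNpos : 0 < N := by
    simp [hN, Fintype.card_pos]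
  refine ⟨(N * β ^ p) ^ (1 / p), ?_, ?_⟩
  · positivity
  · intro n c hc ψ
    -- pull back the characters along the diagonal algebra hom
    let φ : Fin n → characterSpace ℂ A := fun i =>
      CharacterSpace.equivAlgHom.symm
        ((CharacterSpace.equivAlgHom (ψ i)).comp (Pi.constAlgHom ℂ X A))
    obtain ⟨a, ha, hφ⟩ := hA n c hc φ
    refine ⟨fun _ => a, ?_, ?_⟩
    · have hsum : (∑ _x : X, ‖a‖ ^ p) = N * ‖a‖ ^ p := by
        simp [hN, Finset.sum_const, nsmul_eq_mul]
      rw [hsum]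
      apply Real.rpow_le_rpow (by positivity) ?_ (by positivity)
      have : ‖a‖ ^ p ≤ β ^ p :=
        Real.rpow_le_rpow (norm_nonneg a) ha hp0.le
      nlinarith
    · intro i
      have := hφ i
      exact this
end

section
/- Let A be a commutative Banach algebra, X a nonempty set, and 1 ≤ p < ∞. Suppose there exists β > 0 such that for every finite family of unimodular complex numbers cᵢ and characters ψᵢ ∈ Δ(ℓ^p(X, A)) there is f ∈ ℓ^p(X, A) with ‖f‖_{p,A} ≤ β and f̂(ψᵢ) = cᵢ. Then the same property holds for A: for every finite family of unimodular cᵢ and φᵢ ∈ Δ(A), there is a ∈ A with ‖a‖_A ≤ β and â(φᵢ) = cᵢ. -/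
open WeakDual
open scoped ENNReal

/-- Let `A` be a commutative Banach algebra, `X` a nonempty set and
`1 ≤ p < ∞`. If unimodular interpolation with uniform bound `β` holds for the characters
of `ℓ^p(X, A)` (nonzero multiplicative linear functionals), then it holds for the
characters of `A` with the same bound `β`. -/
theorem interpolation_of_lp_interpolation {X A : Type*} [Nonempty X]
    [NormedCommRing A] [NormedAlgebra ℂ A] [CompleteSpace A]
    (p : ℝ≥0∞) [Fact (1 ≤ p)] (hp' : p ≠ ∞)
    (β : ℝ) (hβ : 0 < β)
    (hlp : ∀ (n : ℕ) (c : Fin n → ℂ), (∀ i, ‖c i‖ = 1) →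
      ∀ ψ : Fin n → (lp (fun _ : X => A) p →ₗ[ℂ] ℂ),
        (∀ i, ψ i ≠ 0) →
        (∀ (i : Fin n) (f g h : lp (fun _ : X => A) p),
          (∀ x, h x = f x * g x) → ψ i h = ψ i f * ψ i g) →
        ∃ f : lp (fun _ : X => A) p, ‖f‖ ≤ β ∧ ∀ i, ψ i f = c i) :
    ∀ (n : ℕ) (c : Fin n → ℂ), (∀ i, ‖c i‖ = 1) →
      ∀ φ : Fin n → characterSpace ℂ A,
        ∃ a : A, ‖a‖ ≤ β ∧ ∀ i, φ i a = c i := by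
  intro n c hc φ
  classical
  obtain ⟨x₀⟩ := ‹Nonempty X›
  set ψ : Fin n → (lp (fun _ : X => A) p →ₗ[ℂ] ℂ) := fun i =>
    { toFun := fun f => φ i (f x₀)
      map_add' := fun f g => by
        have : (f + g : lp (fun _ : X => A) p) x₀ = f x₀ + g x₀ := rfl
        simp [this]
      map_smul' := fun r f => by
        have : (r • f : lp (fun _ : X => A) p) x₀ = r • f x₀ := rfl
        simp [this] } with hψ
  have hne : ∀ i, ψ i ≠ 0 := by
    intro i h
    have := congrArg (fun T => T (lp.single p (E := fun _ : X => A) x₀ (1 : A))) h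
    simp only [hψ, LinearMap.coe_mk, AddHom.coe_mk, LinearMap.zero_apply] at this
    rw [lp.single_apply_self] at this
    simp at this
  have hmul : ∀ (i : Fin n) (f g h : lp (fun _ : X => A) p),
      (∀ x, h x = f x * g x) → ψ i h = ψ i f * ψ i g := by
    intro i f g h hfg
    simp only [hψ, LinearMap.coe_mk, AddHom.coe_mk]
    rw [hfg x₀, map_mul]
  obtain ⟨f, hf, hfi⟩ := hlp n c hc ψ hne hmul
  refine ⟨f x₀, ?_, fun i => hfi i⟩
  have hp0 : p ≠ 0 := by
    have : (1 : ℝ≥0∞) ≤ p := Fact.out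
    exact fun h => by simp [h] at this
  exact (lp.norm_apply_le_norm hp0 f x₀).trans hf
end

section
/- Let X be a locally compact Hausdorff space and A a commutative Banach algebra whose character space Δ(A) is nonempty. Suppose there exists β > 0 such that for all unimodular complex numbers c₁,…,cₙ and characters φ₁,…,φₙ ∈ Δ(A) there exists a ∈ A with ‖a‖ ≤ β and â(φᵢ) = cᵢ. Then the analogous property holds for C₀(X, A): for all unimodular c₁,…,cₙ and characters ψᵢ of C₀(X, A) of the form ψᵢ = xᵢ ⊗ φᵢ (with (xᵢ ⊗ φᵢ)(f) = φᵢ(f(xᵢ))), there exists f ∈ C₀(X, A) with ‖f‖_{∞,A} ≤ β and f̂(ψᵢ) = cᵢ. -/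
open scoped ZeroAtInfty
open WeakDual

/-- Let `X` be a locally compact Hausdorff space and `A` a commutative
Banach algebra with nonempty character space. If unimodular interpolation with bound `β`
holds for the characters of `A`, then for all unimodular `c₁, …, cₙ` and characters of
`C₀(X, A)` of the form `xᵢ ⊗ φᵢ` (acting by `f ↦ φᵢ (f xᵢ)`), there is `f ∈ C₀(X, A)`
with `‖f‖ ≤ β` interpolating them. -/
theorem zeroAtInfty_interpolation {X A : Type*} [TopologicalSpace X]
    [LocallyCompactSpace X] [T2Space X]
    [NormedCommRing A] [NormedAlgebra ℂ A] [CompleteSpace A]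
    [Nonempty (characterSpace ℂ A)]
    (β : ℝ) (hβ : 0 < β)
    (hA : ∀ (n : ℕ) (c : Fin n → ℂ), (∀ i, ‖c i‖ = 1) →
      ∀ φ : Fin n → characterSpace ℂ A,
        ∃ a : A, ‖a‖ ≤ β ∧ ∀ i, φ i a = c i) :
    ∀ (n : ℕ) (c : Fin n → ℂ), (∀ i, ‖c i‖ = 1) →
      ∀ (x : Fin n → X) (φ : Fin n → characterSpace ℂ A),
        ∃ f : C₀(X, A), ‖f‖ ≤ β ∧ ∀ i, φ i (f (x i)) = c i := by
  intro n c hc x φ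
  obtain ⟨a, ha, hinterp⟩ := hA n c hc φ
  -- Urysohn: a compactly supported g : X → ℝ with g = 1 on the finite set, 0 ≤ g ≤ 1.
  obtain ⟨g, hg1, -, hgc, hg01⟩ :=
    exists_continuous_one_zero_of_isCompact (Set.finite_range x).isCompact
      isClosed_empty (Set.disjoint_empty _)
  have hzero : Filter.Tendsto (fun y => g y • a) (Filter.cocompact X) (nhds 0) := by
    have h0 : ∀ᶠ y in Filter.cocompact X, g y • a = 0 := by
      filter_upwards [Filter.mem_cocompact.mpr ⟨tsupport g, hgc, le_refl _⟩] with y hy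
      rw [image_eq_zero_of_notMem_tsupport hy, zero_smul]
    exact Filter.Tendsto.congr' (Filter.EventuallyEq.symm h0) tendsto_const_nhds
  refine ⟨⟨⟨fun y => g y • a, (map_continuous g).smul continuous_const⟩, hzero⟩, ?_, ?_⟩
  · rw [← ZeroAtInftyContinuousMap.norm_toBCF_eq_norm]
    refine (BoundedContinuousFunction.norm_le hβ.le).mpr fun y => ?_
    calc ‖g y • a‖ = ‖g y‖ * ‖a‖ := norm_smul _ _
      _ ≤ 1 * β := by
          have := hg01 y
          exact mul_le_mul (by rw [Real.norm_eq_abs, abs_of_nonneg this.1]; exact this.2)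
            ha (norm_nonneg a) zero_le_one
      _ = β := one_mul β
  · intro i
    have : g (x i) = 1 := hg1 (Set.mem_range_self i)
    simp only [ZeroAtInftyContinuousMap.coe_mk, ContinuousMap.coe_mk]
    rw [this, one_smul]
    exact hinterp i
end
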